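/- Suppose 0 < R < R_0(Q). Then there exists ρ₁ ≥ 1 with E_x(ρ₁,Q) = ρ₁R, and there exists ρ₂ ≥ 1 with E_x(ρ₂,Q) = (2ρ₂−1)R. -/

import Mathlib

lemma ivt_aux {F : ℝ → ℝ} {b : ℝ} (hb : 1 ≤ b) (hc : ContinuousOn F (Set.Icc 1 b))
    (h1 : 0 ≤ F 1) (h2 : F b ≤ 0) : ∃ ρ, 1 ≤ ρ ∧ F ρ = 0 := by
  obtain ⟨ρ, hρ, hFρ⟩ := intermediate_value_Icc' hb hc ⟨h2, h1⟩
  exact ⟨ρ, hρ.1, hFρ⟩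

/-- For `0 < R < R₀(Q)` there exist `ρ₁ ≥ 1` with `E_x(ρ₁,Q) = ρ₁ R`
and `ρ₂ ≥ 1` with `E_x(ρ₂,Q) = (2ρ₂−1) R`. -/
theorem stmt_18 {X Y : Type*} [Fintype X] [Fintype Y] [Nonempty X] [Nonempty Y]
    (W : X → Y → ℝ) (hWpos : ∀ x y, 0 < W x y) (hWsum : ∀ x, ∑ y, W x y = 1)
    (Q : X → ℝ) (hQpos : ∀ x, 0 < Q x) (hQsum : ∑ x, Q x = 1)
    (R : ℝ) (hR : 0 < R)
    (hRR0 : R < -Real.log (∑ y, (∑ x, Q x * Real.sqrt (W x y)) ^ 2)) :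
    let Ex : ℝ → ℝ := fun ρ => -ρ * Real.log (∑ p : X × X, Q p.1 * Q p.2 *
        (∑ y, Real.sqrt (W p.1 y * W p.2 y)) ^ (1 / ρ))
    (∃ ρ₁ : ℝ, 1 ≤ ρ₁ ∧ Ex ρ₁ = ρ₁ * R) ∧
    (∃ ρ₂ : ℝ, 1 ≤ ρ₂ ∧ Ex ρ₂ = (2 * ρ₂ - 1) * R) := by
  intro Ex
  set Z : X × X → ℝ := fun p => ∑ y, Real.sqrt (W p.1 y * W p.2 y) with hZdef
  set w : X × X → ℝ := fun p => Q p.1 * Q p.2 with hwdef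
  have hZpos : ∀ p, 0 < Z p := fun p =>
    Finset.sum_pos (fun y _ => Real.sqrt_pos.2 (mul_pos (hWpos _ y) (hWpos _ y)))
      Finset.univ_nonempty
  have hwpos : ∀ p, 0 < w p := fun p => mul_pos (hQpos _) (hQpos _)
  have hwsum : ∑ p : X × X, w p = 1 := by
    rw [Fintype.sum_prod_type]
    simp_rw [hwdef, ← Finset.mul_sum, ← Finset.sum_mul, hQsum, one_mul]
  set S : ℝ → ℝ := fun ρ => ∑ p : X × X, w p * Z p ^ (1 / ρ) with hSdef
  have hSpos : ∀ ρ, 0 < S ρ := fun ρ =>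
    Finset.sum_pos (fun p _ => mul_pos (hwpos p) (Real.rpow_pos_of_pos (hZpos p) _))
      Finset.univ_nonempty
  have hEx : ∀ ρ, Ex ρ = -ρ * Real.log (S ρ) := by
    intro ρ
    simp only [Ex, hSdef, hwdef, hZdef]
  -- value at 1 : the R₀ identity
  have hS1 : S 1 = ∑ y, (∑ x, Q x * Real.sqrt (W x y)) ^ 2 := by
    have h1 : S 1 = ∑ p : X × X, w p * Z p := by
      simp [hSdef]
    rw [h1, Fintype.sum_prod_type]
    have hptwise : ∀ (a b : X) (y : Y),
        Q a * Q b * Real.sqrt (W a y * W b y)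
          = Q a * Real.sqrt (W a y) * (Q b * Real.sqrt (W b y)) := by
      intro a b y
      rw [Real.sqrt_mul (hWpos a y).le]
      ring
    calc ∑ a, ∑ b, w (a, b) * Z (a, b)
        = ∑ a, ∑ b, ∑ y, Q a * Real.sqrt (W a y) * (Q b * Real.sqrt (W b y)) := by
          refine Finset.sum_congr rfl fun a _ => Finset.sum_congr rfl fun b _ => ?_
          rw [hwdef, hZdef, Finset.mul_sum]
          exact Finset.sum_congr rfl fun y _ => hptwise a b y
      _ = ∑ a, ∑ y, ∑ b, Q a * Real.sqrt (W a y) * (Q b * Real.sqrt (W b y)) := by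
          exact Finset.sum_congr rfl fun a _ => Finset.sum_comm
      _ = ∑ y, ∑ a, ∑ b, Q a * Real.sqrt (W a y) * (Q b * Real.sqrt (W b y)) :=
          Finset.sum_comm
      _ = ∑ y, (∑ x, Q x * Real.sqrt (W x y)) ^ 2 := by
          refine Finset.sum_congr rfl fun y _ => ?_
          rw [sq, Finset.sum_mul_sum]
  have hRlt : R < -Real.log (S 1) := by rw [hS1]; exact hRR0
  -- lower bound on S ρ
  set M : ℝ := -(∑ p : X × X, w p * Real.log (Z p)) with hMdef
  have hSlb : ∀ ρ : ℝ, 1 ≤ ρ → 1 - M / ρ ≤ S ρ := by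
    intro ρ hρ
    have hρ0 : (0:ℝ) < ρ := lt_of_lt_of_le one_pos hρ
    have hterm : ∀ p : X × X, 1 + Real.log (Z p) / ρ ≤ Z p ^ (1 / ρ) := by
      intro p
      rw [Real.rpow_def_of_pos (hZpos p), mul_one_div]
      have := Real.add_one_le_exp (Real.log (Z p) / ρ)
      linarith
    have : ∑ p : X × X, w p * (1 + Real.log (Z p) / ρ) ≤ S ρ :=
      Finset.sum_le_sum fun p _ =>
        mul_le_mul_of_nonneg_left (hterm p) (hwpos p).le
    calc 1 - M / ρ = ∑ p : X × X, w p * (1 + Real.log (Z p) / ρ) := by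
          simp_rw [mul_add, mul_one, Finset.sum_add_distrib, hwsum, mul_div_assoc']
          rw [← Finset.sum_div, hMdef]
          ring
      _ ≤ S ρ := this
  -- choose b
  have hden : 0 < 1 - Real.exp (-R) := by
    have : Real.exp (-R) < 1 := Real.exp_lt_one_iff.2 (by linarith)
    linarith
  set b : ℝ := max 1 ((|M| + 1) / (1 - Real.exp (-R))) with hbdef
  have hb1 : 1 ≤ b := le_max_left _ _
  have hb0 : (0:ℝ) < b := lt_of_lt_of_le one_pos hb1
  have hbM : M / b < 1 - Real.exp (-R) := by
    have h1 : M / b ≤ |M| / b := by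
      apply div_le_div_of_nonneg_right (le_abs_self M) hb0.le
    have h2 : |M| / b < 1 - Real.exp (-R) := by
      rw [div_lt_iff₀ hb0]
      have : (|M| + 1) / (1 - Real.exp (-R)) ≤ b := le_max_right _ _
      have h3 : |M| + 1 ≤ (1 - Real.exp (-R)) * b := by
        rw [← div_le_iff₀' hden]
        exact this
      nlinarith [abs_nonneg M]
    linarith
  have hSb : Real.exp (-R) < S b := lt_of_lt_of_le (by linarith [hSlb b hb1]) (hSlb b hb1)
  have hlogSb : -R < Real.log (S b) := (Real.lt_log_iff_exp_lt (hSpos b)).2 hSb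
  have hExb : Ex b < b * R := by
    rw [hEx b]
    have : -Real.log (S b) < R := by linarith
    calc -b * Real.log (S b) = b * (-Real.log (S b)) := by ring
      _ < b * R := by exact mul_lt_mul_of_pos_left this hb0
  -- continuity
  have hScont : ContinuousOn S (Set.Icc 1 b) := by
    apply continuousOn_finset_sum
    intro p _
    apply ContinuousOn.mul continuousOn_const
    apply ContinuousOn.rpow continuousOn_const
    · exact ContinuousOn.div continuousOn_const continuousOn_id
        (fun x hx => by have := hx.1; positivity)
    · intro x _
      exact Or.inl (hZpos p).ne'
  have hExcont : ContinuousOn (fun ρ => -ρ * Real.log (S ρ)) (Set.Icc 1 b) := by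
    apply ContinuousOn.mul (continuousOn_id.neg)
    exact ContinuousOn.log hScont (fun x _ => (hSpos x).ne')
  constructor
  · obtain ⟨ρ, hρ1, hρeq⟩ := ivt_aux (F := fun ρ => -ρ * Real.log (S ρ) - ρ * R) hb1
      (hExcont.sub (continuousOn_id.mul continuousOn_const))
      (by nlinarith) (by nlinarith [hEx b, hExb])
    exact ⟨ρ, hρ1, by rw [hEx ρ]; linarith⟩
  · obtain ⟨ρ, hρ1, hρeq⟩ := ivt_aux (F := fun ρ => -ρ * Real.log (S ρ) - (2 * ρ - 1) * R) hb1
      (hExcont.sub ((continuousOn_const.mul continuousOn_id).sub continuousOn_const |>.mul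
        continuousOn_const))
      (by nlinarith) (by nlinarith [hEx b, hExb])
    exact ⟨ρ, hρ1, by rw [hEx ρ]; linarith⟩
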